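/- For the mode matrices A_I, A_II of the semi-quasi-Z-source inverter, any time durations t_I, t_II > 0 and ε ≥ 0, the matrix M_ε = e^{A_I ε} e^{A_II t_II} e^{A_I t_I} satisfies M_εᵀ P M_ε − P ≤ 0 (negative semidefinite), where P = (1/2)diag(L1,L2,C1,C2). -/

import Mathlib

open Matrix NormedSpace

attribute [local instance] Matrix.linftyOpNormedRing Matrix.linftyOpNormedAlgebra

section Aux
variable {n : Type*} [Fintype n] [DecidableEq n]

private lemma hasDerivAt_expVec (A : Matrix n n ℝ) (x : n → ℝ) (s : ℝ) (i : n) :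
    HasDerivAt (fun t : ℝ => (exp (t • A) *ᵥ x) i)
      ((A *ᵥ (exp (s • A) *ᵥ x)) i) s := by
  have hE : HasDerivAt (fun t : ℝ => exp (t • A)) (A * exp (s • A)) s :=
    hasDerivAt_exp_smul_const' A s
  let L : Matrix n n ℝ →ₗ[ℝ] ℝ :=
    { toFun := fun M => (M *ᵥ x) i
      map_add' := fun M N => by simp [Matrix.add_mulVec]
      map_smul' := fun c M => by simp [Matrix.smul_mulVec] }
  have := (LinearMap.toContinuousLinearMap L).hasFDerivAt.comp_hasDerivAt s hE
  simp only [Function.comp_def] at this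
  refine this.congr_deriv ?_
  simp [L, Matrix.mulVec_mulVec]
  rfl
end Aux

private lemma quad_exp_le {P Q A : Matrix (Fin 4) (Fin 4) ℝ}
    (hQ : ∀ v : Fin 4 → ℝ, 0 ≤ v ⬝ᵥ Q *ᵥ v)
    (hL : Aᵀ * P + P * A = -Q) {t : ℝ} (ht : 0 ≤ t) (x : Fin 4 → ℝ) :
    (exp (t • A) *ᵥ x) ⬝ᵥ P *ᵥ (exp (t • A) *ᵥ x) ≤ x ⬝ᵥ P *ᵥ x := by
  set y : ℝ → (Fin 4 → ℝ) := fun s => exp (s • A) *ᵥ x with hy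
  set g : ℝ → ℝ := fun s => y s ⬝ᵥ P *ᵥ y s with hg
  have key : ∀ s, HasDerivAt g (-(y s ⬝ᵥ Q *ᵥ y s)) s := by
    intro s
    have hyd : ∀ i, HasDerivAt (fun t => y t i) ((A *ᵥ y s) i) s := fun i =>
      hasDerivAt_expVec A x s i
    have h1 : HasDerivAt g
        ((A *ᵥ y s) ⬝ᵥ (P *ᵥ y s) + y s ⬝ᵥ (P *ᵥ (A *ᵥ y s))) s := by
      have hterm : ∀ i ∈ Finset.univ, HasDerivAt
          (fun t => ∑ j, y t i * (P i j * y t j))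
          (∑ j, ((A *ᵥ y s) i * (P i j * y s j) + y s i * (P i j * (A *ᵥ y s) j))) s := by
        intro i _
        exact HasDerivAt.fun_sum fun j _ => (hyd i).mul ((hyd j).const_mul (P i j))
      have := HasDerivAt.fun_sum hterm
      have hgeq : g = fun t => ∑ i, ∑ j, y t i * (P i j * y t j) := by
        funext t
        simp [hg, dotProduct, Matrix.mulVec, Finset.mul_sum]
      rw [hgeq]
      refine this.congr_deriv ?_
      simp [dotProduct, Matrix.mulVec, Finset.mul_sum, Finset.sum_add_distrib]
    have heq : (A *ᵥ y s) ⬝ᵥ (P *ᵥ y s) + y s ⬝ᵥ (P *ᵥ (A *ᵥ y s))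
        = -(y s ⬝ᵥ Q *ᵥ y s) := by
      have h2 : ∀ u : Fin 4 → ℝ, (A *ᵥ u) ⬝ᵥ (P *ᵥ u) = u ⬝ᵥ ((Aᵀ * P) *ᵥ u) := by
        intro u
        conv_lhs => rw [Matrix.dotProduct_mulVec]
        conv_rhs => rw [Matrix.dotProduct_mulVec, ← Matrix.vecMul_vecMul,
          Matrix.vecMul_transpose]
      have h3 : y s ⬝ᵥ (P *ᵥ (A *ᵥ y s)) = y s ⬝ᵥ ((P * A) *ᵥ y s) := by
        rw [Matrix.mulVec_mulVec]
      rw [h2 (y s), h3, ← dotProduct_add, ← Matrix.add_mulVec, hL]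
      simp [Matrix.neg_mulVec]
    rwa [heq] at h1
  have hmono : Antitone g :=
    antitone_of_deriv_nonpos (fun s => (key s).differentiableAt)
      (fun s => by rw [(key s).deriv]; simpa using hQ (y s))
  have h0 : g 0 = x ⬝ᵥ P *ᵥ x := by
    simp [hg, hy, exp_zero]
  calc (exp (t • A) *ᵥ x) ⬝ᵥ P *ᵥ (exp (t • A) *ᵥ x) = g t := rfl
    _ ≤ g 0 := hmono ht
    _ = x ⬝ᵥ P *ᵥ x := h0

set_option maxHeartbeats 1600000 in
/-- M_ε = e^{A_I ε} e^{A_II t_II} e^{A_I t_I} satisfies M_εᵀPM_ε - P ≤ 0. -/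
theorem Meps_nonexpansive
    (L1 L2 C1 C2 R : ℝ) (hL1 : 0 < L1) (hL2 : 0 < L2) (hC1 : 0 < C1)
    (hC2 : 0 < C2) (hR : 0 < R)
    (P : Matrix (Fin 4) (Fin 4) ℝ) (hP : P = (1/2 : ℝ) • Matrix.diagonal ![L1, L2, C1, C2])
    (AIq AIIq : Matrix (Fin 4) (Fin 4) ℝ)
    (hAIq : AIq = !![0,0,0,0; 0,0,1,1; 0,-1,0,0; 0,-1,0,-1/R])
    (hAIIq : AIIq = !![0,0,-1,0; 0,0,0,1; 1,0,0,0; 0,-1,0,-1/R])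
    (AI AII : Matrix (Fin 4) (Fin 4) ℝ)
    (hAI : AI = (1/2 : ℝ) • (P⁻¹ * AIq)) (hAII : AII = (1/2 : ℝ) • (P⁻¹ * AIIq))
    (tI tII ε : ℝ) (htI : 0 < tI) (htII : 0 < tII) (hε : 0 ≤ ε)
    (Mε : Matrix (Fin 4) (Fin 4) ℝ)
    (hMε : Mε = NormedSpace.exp (ε • AI) * NormedSpace.exp (tII • AII) *
                NormedSpace.exp (tI • AI)) :
    (P - Mεᵀ * P * Mε).PosSemidef := by
  have hL1' := hL1.ne'
  have hL2' := hL2.ne'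
  have hC1' := hC1.ne'
  have hC2' := hC2.ne'
  have hR' := hR.ne'
  -- inverse of P
  have hPD : P * Matrix.diagonal ![2/L1, 2/L2, 2/C1, 2/C2] = 1 := by
    have hv : (fun i => ![L1,L2,C1,C2] i * ![2/L1,2/L2,2/C1,2/C2] i)
        = fun _ : Fin 4 => (2:ℝ) := by
      funext i
      fin_cases i <;> simp <;> field_simp
    rw [hP, Matrix.smul_mul, Matrix.diagonal_mul_diagonal, hv]
    ext i j
    by_cases h : i = j
    · subst h; simp
    · simp [Matrix.diagonal_apply_ne _ h, Matrix.one_apply_ne h]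
  have hPinv : P⁻¹ = Matrix.diagonal ![2/L1, 2/L2, 2/C1, 2/C2] :=
    Matrix.inv_eq_right_inv hPD
  set Q : Matrix (Fin 4) (Fin 4) ℝ := Matrix.diagonal ![0, 0, 0, 1/R] with hQdef
  have hQpsd : Q.PosSemidef := by
    refine Matrix.PosSemidef.diagonal ?_
    intro i
    fin_cases i <;> simp <;> positivity
  have hQ : ∀ v : Fin 4 → ℝ, 0 ≤ v ⬝ᵥ Q *ᵥ v := by
    intro v
    simpa using hQpsd.dotProduct_mulVec_nonneg v
  have hPt : Pᵀ = P := by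
    rw [hP]; simp
  -- P * AI and P * AII
  have hPAI : P * AI = (1/2 : ℝ) • AIq := by
    rw [hAI, hPinv, Matrix.mul_smul, ← Matrix.mul_assoc, hPD, one_mul]
  have hPAII : P * AII = (1/2 : ℝ) • AIIq := by
    rw [hAII, hPinv, Matrix.mul_smul, ← Matrix.mul_assoc, hPD, one_mul]
  have hAItP : AIᵀ * P = (1/2 : ℝ) • AIqᵀ := by
    have : AIᵀ * P = (P * AI)ᵀ := by rw [Matrix.transpose_mul, hPt]
    rw [this, hPAI, Matrix.transpose_smul]
  have hAIItP : AIIᵀ * P = (1/2 : ℝ) • AIIqᵀ := by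
    have : AIIᵀ * P = (P * AII)ᵀ := by rw [Matrix.transpose_mul, hPt]
    rw [this, hPAII, Matrix.transpose_smul]
  have hAIqT : AIqᵀ = !![0,0,0,0; 0,0,-1,-1; 0,1,0,0; 0,1,0,-1/R] := by
    rw [hAIq]
    ext i j; fin_cases i <;> fin_cases j <;> simp [Matrix.transpose_apply, Matrix.vecHead, Matrix.vecTail]
  have hAIIqT : AIIqᵀ = !![0,0,1,0; 0,0,0,-1; -1,0,0,0; 0,1,0,-1/R] := by
    rw [hAIIq]
    ext i j; fin_cases i <;> fin_cases j <;> simp [Matrix.transpose_apply, Matrix.vecHead, Matrix.vecTail]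
  have hLI : AIᵀ * P + P * AI = -Q := by
    rw [hAItP, hPAI, ← smul_add, hAIqT, hAIq, hQdef]
    ext i j
    fin_cases i <;> fin_cases j <;>
      simp [Matrix.diagonal_apply, Matrix.vecHead, Matrix.vecTail] <;> field_simp <;> ring
  have hLII : AIIᵀ * P + P * AII = -Q := by
    rw [hAIItP, hPAII, ← smul_add, hAIIqT, hAIIq, hQdef]
    ext i j
    fin_cases i <;> fin_cases j <;>
      simp [Matrix.diagonal_apply, Matrix.vecHead, Matrix.vecTail] <;> field_simp <;> ring
  refine Matrix.PosSemidef.of_dotProduct_mulVec_nonneg ?_ ?_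
  · -- hermitian
    show (P - Mεᵀ * P * Mε)ᴴ = P - Mεᵀ * P * Mε
    rw [Matrix.conjTranspose_eq_transpose_of_trivial]
    simp [Matrix.transpose_sub, Matrix.transpose_mul, hPt, Matrix.mul_assoc]
  · intro x
    have hx : star x = x := by simp
    rw [hx]
    have hsub : (P - Mεᵀ * P * Mε) *ᵥ x = P *ᵥ x - (Mεᵀ * P * Mε) *ᵥ x := by
      rw [Matrix.sub_mulVec]
    rw [hsub, dotProduct_sub, sub_nonneg]
    have hquad : x ⬝ᵥ ((Mεᵀ * P * Mε) *ᵥ x) = (Mε *ᵥ x) ⬝ᵥ (P *ᵥ (Mε *ᵥ x)) := by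
      conv_lhs => rw [Matrix.mul_assoc, ← Matrix.mulVec_mulVec,
        Matrix.dotProduct_mulVec, Matrix.vecMul_transpose, ← Matrix.mulVec_mulVec]
    rw [hquad]
    have hMx : Mε *ᵥ x
        = exp (ε • AI) *ᵥ (exp (tII • AII) *ᵥ (exp (tI • AI) *ᵥ x)) := by
      rw [hMε, Matrix.mulVec_mulVec, Matrix.mulVec_mulVec]
    rw [hMx]
    calc (exp (ε • AI) *ᵥ (exp (tII • AII) *ᵥ (exp (tI • AI) *ᵥ x))) ⬝ᵥ
          (P *ᵥ (exp (ε • AI) *ᵥ (exp (tII • AII) *ᵥ (exp (tI • AI) *ᵥ x))))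
        ≤ (exp (tII • AII) *ᵥ (exp (tI • AI) *ᵥ x)) ⬝ᵥ
          (P *ᵥ (exp (tII • AII) *ᵥ (exp (tI • AI) *ᵥ x))) :=
          quad_exp_le hQ hLI hε _
      _ ≤ (exp (tI • AI) *ᵥ x) ⬝ᵥ (P *ᵥ (exp (tI • AI) *ᵥ x)) :=
          quad_exp_le hQ hLII htII.le _
      _ ≤ x ⬝ᵥ P *ᵥ x := quad_exp_le hQ hLI htI.le _
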